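/- arXiv:2505.09360 — 2 statements merged into one kernel-verified Lean document; each statement's English description precedes it below -/
import Mathlib

section
/- For the digit set $D = \{(0,0)^t, (1,0)^t, (1,1)^t, (2,1)^t, (2,2)^t\} \subset \mathbb{Z}^2$, the zero set of the mask polynomial $m_D$ equals $\bigcup_{j=1}^{4}\left(\frac{j}{5}(1,1)^t + \mathbb{Z}^2\right)$. -/
/-- The mask polynomial of a finite digit set `D ⊂ ℤ²`. -/
noncomputable def maskPoly (D : Finset (ℤ × ℤ)) (ξ : ℝ × ℝ) : ℂ :=
  (D.card : ℂ)⁻¹ * ∑ d ∈ D, Complex.exp (2 * (Real.pi : ℂ) * Complex.I *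
    ((ξ.1 * d.1 + ξ.2 * d.2 : ℝ) : ℂ))


noncomputable def ee (x : ℝ) : ℂ := Complex.exp (2 * (Real.pi : ℂ) * Complex.I * x)

lemma ee_add (x y : ℝ) : ee (x + y) = ee x * ee y := by
  rw [ee, ee, ee, ← Complex.exp_add]; congr 1; push_cast; ring

lemma ee_ne_zero (x : ℝ) : ee x ≠ 0 := Complex.exp_ne_zero _

lemma ee_pow (x : ℝ) (n : ℕ) : (ee x)^n = ee (n * x) := by
  rw [ee, ee, ← Complex.exp_nat_mul]; congr 1; push_cast; ring

lemma ee_eq_one_iff (x : ℝ) : ee x = 1 ↔ ∃ n : ℤ, x = n := by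
  rw [ee, Complex.exp_eq_one_iff]
  have h2 : (2 * (Real.pi:ℂ) * Complex.I) ≠ 0 := by
    simp [Real.pi_ne_zero, Complex.I_ne_zero]
  constructor
  · rintro ⟨n, hn⟩
    refine ⟨n, ?_⟩
    have : (x:ℂ) = (n:ℂ) := mul_left_cancel₀ h2 (by linear_combination hn)
    exact_mod_cast this
  · rintro ⟨n, rfl⟩
    exact ⟨n, by push_cast; ring⟩

lemma ee_inv (x : ℝ) : ee (-x) = (ee x)⁻¹ := by
  apply eq_inv_of_mul_eq_one_left
  rw [← ee_add]
  simp [ee]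

lemma ee_conj (x : ℝ) : (starRingEnd ℂ) (ee x) = (ee x)⁻¹ := by
  rw [← ee_inv, ee, ee, ← Complex.exp_conj]
  congr 1
  simp only [map_mul, Complex.conj_I, Complex.conj_ofReal, map_ofNat]
  push_cast
  ring




lemma ee_comb (x y : ℝ) (a b : ℕ) :
    Complex.exp (2 * (Real.pi : ℂ) * Complex.I * ((x:ℂ) * (a:ℂ) + (y:ℂ) * (b:ℂ)))
      = (ee x)^a * (ee y)^b := by
  rw [ee, ee, ← Complex.exp_nat_mul, ← Complex.exp_nat_mul, ← Complex.exp_add]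
  congr 1
  ring

lemma mask_eq (x y : ℝ) :
    maskPoly ({(0,0), (1,0), (1,1), (2,1), (2,2)} : Finset (ℤ × ℤ)) (x, y)
      = (5:ℂ)⁻¹ * (1 + ee x + ee x * ee y + (ee x)^2 * ee y + (ee x)^2 * (ee y)^2) := by
  unfold maskPoly
  rw [show (({(0,0), (1,0), (1,1), (2,1), (2,2)} : Finset (ℤ × ℤ)).card) = 5 from rfl]
  rw [Finset.sum_insert (by decide), Finset.sum_insert (by decide),
      Finset.sum_insert (by decide), Finset.sum_insert (by decide), Finset.sum_singleton]
  push_cast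
  rw [show ((x:ℂ) * 0 + (y:ℂ) * 0) = (x:ℂ) * ((0:ℕ):ℂ) + (y:ℂ) * ((0:ℕ):ℂ) by norm_num,
      show ((x:ℂ) * 1 + (y:ℂ) * 0) = (x:ℂ) * ((1:ℕ):ℂ) + (y:ℂ) * ((0:ℕ):ℂ) by norm_num,
      show ((x:ℂ) * 1 + (y:ℂ) * 1) = (x:ℂ) * ((1:ℕ):ℂ) + (y:ℂ) * ((1:ℕ):ℂ) by norm_num,
      show ((x:ℂ) * 2 + (y:ℂ) * 1) = (x:ℂ) * ((2:ℕ):ℂ) + (y:ℂ) * ((1:ℕ):ℂ) by norm_num,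
      show ((x:ℂ) * 2 + (y:ℂ) * 2) = (x:ℂ) * ((2:ℕ):ℂ) + (y:ℂ) * ((2:ℕ):ℂ) by norm_num,
      ee_comb x y 0 0, ee_comb x y 1 0, ee_comb x y 1 1, ee_comb x y 2 1, ee_comb x y 2 2]
  ring

/-- The zero set of the mask polynomial of `D = {(0,0),(1,0),(1,1),(2,1),(2,2)}`
equals `⋃_{j=1}^{4} (j/5)(1,1)ᵗ + ℤ²`. -/
theorem stmt2 :
    {ξ : ℝ × ℝ | maskPoly ({(0,0), (1,0), (1,1), (2,1), (2,2)} : Finset (ℤ × ℤ)) ξ = 0} =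
      {ξ : ℝ × ℝ | ∃ j ∈ Finset.Icc (1:ℕ) 4, ∃ z : ℤ × ℤ,
        ξ = ((j:ℝ)/5 + (z.1:ℝ), (j:ℝ)/5 + (z.2:ℝ))} := by
  ext ⟨x, y⟩
  simp only [Set.mem_setOf_eq, mask_eq]
  rw [mul_eq_zero, or_iff_right (by norm_num : ((5:ℂ)⁻¹) ≠ 0)]
  constructor
  · intro hS
    -- conjugate equation
    have hc0 := congrArg (starRingEnd ℂ) hS
    simp only [map_add, map_mul, map_one, map_pow, map_zero, ee_conj] at hc0
    have hc := hc0
    field_simp [ee_ne_zero] at hc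
    have hf : (ee x)^4 * (ee y)^2 *
        ((ee x)^2*(ee y)^2 + ee x*(ee y)^2 + ee x*ee y + ee y + 1) = 0 := by
      linear_combination (ee x)^4 * (ee y)^2 * hc
    have hQ := (mul_eq_zero.mp hf).resolve_left
      (mul_ne_zero (pow_ne_zero _ (ee_ne_zero x)) (pow_ne_zero _ (ee_ne_zero y)))
    have key : (ee x - ee y) * (1 + ee x * ee y) = 0 := by linear_combination hS - hQ
    rcases mul_eq_zero.mp key with h | h
    swap
    · exfalso
      have h1 : (1:ℂ) = 0 := by linear_combination hS - (ee x + ee x * ee y) * h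
      norm_num at h1
    · -- ee x = ee y
      have hv : ee y = ee x := (sub_eq_zero.mp h).symm
      rw [hv] at hS
      have hu5 : (ee x)^5 = 1 := by linear_combination (ee x - 1) * hS
      have hu1 : ee x ≠ 1 := by
        intro h1
        rw [h1] at hS
        norm_num at hS
      -- 5x ∈ ℤ
      obtain ⟨k, hk⟩ : ∃ k : ℤ, 5 * x = k := by
        rw [← ee_eq_one_iff, show (5:ℝ) * x = ((5:ℕ):ℝ) * x by norm_num, ← ee_pow]
        exact hu5
      -- x - y ∈ ℤ
      obtain ⟨n, hn⟩ : ∃ n : ℤ, x - y = n := by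
        rw [← ee_eq_one_iff]
        have h2 : ee (x - y) * ee y = ee x := by rw [← ee_add, sub_add_cancel]
        have h3 : ee (x - y) * ee y = 1 * ee y := by rw [h2, ← hv, one_mul]
        exact mul_right_cancel₀ (ee_ne_zero y) h3
      -- x is not an integer
      have hxnot : ¬ ∃ m : ℤ, x = m := by
        rw [← ee_eq_one_iff]; exact hu1
      have h5k : ¬ ((5:ℤ) ∣ k) := by
        rintro ⟨m, rfl⟩
        exact hxnot ⟨m, by push_cast at hk ⊢; linarith⟩
      refine ⟨(k % 5).toNat, ?_, ⟨k / 5, k / 5 - n⟩, ?_⟩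
      · have h0 : 0 ≤ k % 5 := Int.emod_nonneg k (by norm_num)
        have h4 : k % 5 < 5 := Int.emod_lt_of_pos k (by norm_num)
        have hne : k % 5 ≠ 0 := fun h => h5k (Int.dvd_of_emod_eq_zero h)
        simp only [Finset.mem_Icc]
        omega
      · have hj : ((k % 5).toNat : ℝ) = ((k % 5 : ℤ) : ℝ) := by
          norm_cast
          omega
        have hdiv : (k % 5 : ℤ) + 5 * (k / 5) = k := Int.emod_add_mul_ediv k 5
        have hx : x = ((k % 5).toNat : ℝ)/5 + ((k/5 : ℤ) : ℝ) := by
          rw [hj]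
          have : ((k % 5 : ℤ) : ℝ) + 5 * ((k/5 : ℤ) : ℝ) = (k : ℝ) := by exact_mod_cast hdiv
          field_simp
          linarith [hk]
        have hy : y = ((k % 5).toNat : ℝ)/5 + ((k/5 - n : ℤ) : ℝ) := by
          push_cast
          push_cast at hx
          linarith
        simp [Prod.ext_iff, hx, hy]
  · rintro ⟨j, hj, ⟨z1, z2⟩, hxy⟩
    simp only [Prod.mk.injEq] at hxy
    obtain ⟨hx, hy⟩ := hxy
    simp only [Finset.mem_Icc] at hj
    set w := ee ((j:ℝ)/5) with hw
    have hzx : ee x = w := by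
      rw [hx, ee_add, (ee_eq_one_iff _).mpr ⟨z1, rfl⟩, mul_one]
    have hzy : ee y = w := by
      rw [hy, ee_add, (ee_eq_one_iff _).mpr ⟨z2, rfl⟩, mul_one]
    have hw5 : w^5 = 1 := by
      rw [hw, ee_pow]
      refine (ee_eq_one_iff _).mpr ⟨j, ?_⟩
      push_cast
      field_simp
    have hw1 : w ≠ 1 := by
      intro h1
      obtain ⟨m, hm⟩ := (ee_eq_one_iff ((j:ℝ)/5)).mp h1
      have h1 : (1:ℝ) ≤ j := by exact_mod_cast hj.1
      have h4 : (j:ℝ) ≤ 4 := by exact_mod_cast hj.2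
      have : (0:ℝ) < m ∧ (m:ℝ) < 1 := by constructor <;> [linarith [hm]; linarith [hm]]
      have h0 : 0 < m := by exact_mod_cast this.1
      have h1' : m < 1 := by exact_mod_cast this.2
      omega
    have hfac : (w - 1) * (1 + w + w^2 + w^3 + w^4) = 0 := by linear_combination hw5
    have hz := (mul_eq_zero.mp hfac).resolve_left (sub_ne_zero.mpr hw1)
    rw [hzx, hzy]
    linear_combination hz
end

section
/- For the digit set $D = \{(0,0)^t, (1,0)^t, (0,1)^t, (1,1)^t, (3,3)^t\} \subset \mathbb{Z}^2$, the zero set of the mask polynomial $m_D$ equals $\left(\bigcup_{j=1}^{4}\left(\frac{j}{5}(1,2)^t + \mathbb{Z}^2\right)\right) \cup \left(\bigcup_{j=1}^{4}\left(\frac{j}{5}(1,3)^t + \mathbb{Z}^2\right)\right)$. -/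
open Complex

private lemma abs_exp_real' (r : ℝ) : ‖Complex.exp (2*(Real.pi:ℂ)*I*(r:ℂ))‖ = 1 := by
  rw [Complex.norm_exp]; simp [Complex.mul_re]

private lemma two_pi_I_ne' : (2*(Real.pi:ℂ)*I) ≠ 0 := by
  simp [Real.pi_ne_zero, Complex.I_ne_zero, Complex.ofReal_ne_zero]

private lemma root_pow5' (j : ℕ) : Complex.exp (2*(Real.pi:ℂ)*I*(((j:ℝ)/5:ℝ):ℂ))^5 = 1 := by
  rw [← Complex.exp_nat_mul]
  rw [show ((5:ℕ):ℂ) * (2*(Real.pi:ℂ)*I*(((j:ℝ)/5:ℝ):ℂ)) = (j:ℤ) * (2*(Real.pi:ℂ)*I) by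
    push_cast; ring]
  exact Complex.exp_int_mul_two_pi_mul_I j

private lemma root_ne_one' (j : ℕ) (h1 : 1 ≤ j) (h4 : j ≤ 4) :
    Complex.exp (2*(Real.pi:ℂ)*I*(((j:ℝ)/5:ℝ):ℂ)) ≠ 1 := by
  intro hone
  rw [Complex.exp_eq_one_iff] at hone
  obtain ⟨n, hn⟩ := hone
  rw [show ((n:ℂ) * (2*(Real.pi:ℂ)*I)) = (2*(Real.pi:ℂ)*I) * (n:ℂ) by ring,
     show (2*(Real.pi:ℂ)*I*(((j:ℝ)/5:ℝ):ℂ)) = (2*(Real.pi:ℂ)*I) * (((j:ℝ)/5:ℝ):ℂ) by ring] at hn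
  have h2 : (((j:ℝ)/5:ℝ):ℂ) = (n:ℂ) := mul_left_cancel₀ two_pi_I_ne' hn
  have h3 : (j:ℝ)/5 = (n:ℝ) := by exact_mod_cast h2
  have h5 : (5:ℝ) * n = j := by linarith
  have : (5 * n : ℤ) = (j:ℤ) := by exact_mod_cast h5
  omega

private lemma alg' (x y : ℂ) (hx : ‖x‖ = 1) (hy : ‖y‖ = 1)
    (h : 1 + x + y + x*y + x^3*y^3 = 0) :
    x^5 = 1 ∧ x ≠ 1 ∧ (y = x^2 ∨ y = x^3) := by
  have hx0 : x ≠ 0 := by intro h0; rw [h0] at hx; simp at hx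
  have hy0 : y ≠ 0 := by intro h0; rw [h0] at hy; simp at hy
  have hc := congrArg (starRingEnd ℂ) h
  simp only [map_add, map_mul, map_one, map_pow, map_zero] at hc
  rw [← Complex.inv_eq_conj hx, ← Complex.inv_eq_conj hy] at hc
  have hQ : x^3*y^3 + x^2*y^3 + x^3*y^2 + x^2*y^2 + 1 = 0 := by
    have h2 : (x*y) * (x^3*y^3 + x^2*y^3 + x^3*y^2 + x^2*y^2 + 1) = (x*y) * 0 := by
      field_simp at hc
      linear_combination (x*y) * hc
    exact mul_left_cancel₀ (mul_ne_zero hx0 hy0) h2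
  have hp1 : x * y ≠ 1 := by
    intro hp
    have hxy : x + y = -3 := by
      linear_combination h - (x^2*y^2 + x*y + 2) * hp
    have h2 : ‖x + y‖ ≤ 2 := by
      calc ‖x + y‖ ≤ ‖x‖ + ‖y‖ := norm_add_le x y
        _ = 2 := by rw [hx, hy]; norm_num
    rw [hxy] at h2
    norm_num at h2
  have hfac : (1 - x*y) * ((x+y)*(1+x*y) + x*y) = 0 := by linear_combination h - hQ
  have hsp : (x+y)*(1+x*y) + x*y = 0 := by
    rcases mul_eq_zero.mp hfac with h'|h'
    · exact absurd (by linear_combination -h' : x*y = 1) hp1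
    · exact h'
  have hp1' : 1 + x*y ≠ 0 := by
    intro h0
    have : x*y = 0 := by linear_combination hsp - (x+y) * h0
    exact mul_ne_zero hx0 hy0 this
  have hquint : 1 + x*y + (x*y)^2 + (x*y)^3 + (x*y)^4 = 0 := by
    linear_combination (1 + x*y) * h - hsp
  have hp5 : (x*y)^5 = 1 := by linear_combination (x*y - 1) * hquint
  have hs : x + y = (x*y)^2 + (x*y)^4 := by
    have h2 : ((x+y) - ((x*y)^2 + (x*y)^4)) * (1 + x*y) = 0 := by
      linear_combination hsp - hquint - hp5
    rcases mul_eq_zero.mp h2 with h'|h'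
    · linear_combination h'
    · exact absurd h' hp1'
  have hxx : (x - (x*y)^2) * (x - (x*y)^4) = 0 := by
    linear_combination x * hs + (x*y) * hp5
  have hdisj : x^5 = 1 ∧ (y = x^2 ∨ y = x^3) := by
    rcases mul_eq_zero.mp hxx with h'|h'
    · have hx2 : x = (x*y)^2 := by linear_combination h'
      refine ⟨?_, Or.inl ?_⟩
      · linear_combination (x^4+x^3*(x*y)^2+x^2*(x*y)^4+x*(x*y)^6+(x*y)^8) * hx2
          + ((x*y)^5+1) * hp5
      · have h2 : x * (y - x^2) = 0 := by
          linear_combination (-(x^2+x*(x*y)^2+(x*y)^4)) * hx2 - (x*y) * hp5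
        rcases mul_eq_zero.mp h2 with h''|h''
        · exact absurd h'' hx0
        · linear_combination h''
    · have hx4 : x = (x*y)^4 := by linear_combination h'
      refine ⟨?_, Or.inr ?_⟩
      · linear_combination (x^4+x^3*(x*y)^4+x^2*(x*y)^8+x*(x*y)^12+(x*y)^16) * hx4
          + ((x*y)^15+(x*y)^10+(x*y)^5+1) * hp5
      · have h2 : x * (y - x^3) = 0 := by
          linear_combination (-(x^3+x^2*(x*y)^4+x*(x*y)^8+(x*y)^12)) * hx4
            - (x*y)*((x*y)^10+(x*y)^5+1) * hp5
        rcases mul_eq_zero.mp h2 with h''|h''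
        · exact absurd h'' hx0
        · linear_combination h''
  obtain ⟨hx5, hy23⟩ := hdisj
  refine ⟨hx5, ?_, hy23⟩
  intro hx1
  rcases hy23 with hy'|hy' <;> rw [hx1] at hy' h <;> norm_num at hy' <;>
    rw [hy'] at h <;> norm_num at h


private lemma geom5' (t : ℂ) (h5 : t^5 = 1) (h1 : t ≠ 1) : 1 + t + t^2 + t^3 + t^4 = 0 := by
  have h := sub_ne_zero.mpr h1
  have h2 : (t - 1) * (1 + t + t^2 + t^3 + t^4) = 0 := by linear_combination h5
  rcases mul_eq_zero.mp h2 with h'|h'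
  · exact absurd h' h
  · exact h'

private lemma maskExpand (a b : ℝ) :
    maskPoly ({(0,0), (1,0), (0,1), (1,1), (3,3)} : Finset (ℤ × ℤ)) (a, b) =
      (5:ℂ)⁻¹ * (1 + exp (2*(Real.pi:ℂ)*I*(a:ℂ)) + exp (2*(Real.pi:ℂ)*I*(b:ℂ))
        + exp (2*(Real.pi:ℂ)*I*(a:ℂ)) * exp (2*(Real.pi:ℂ)*I*(b:ℂ))
        + exp (2*(Real.pi:ℂ)*I*(a:ℂ))^3 * exp (2*(Real.pi:ℂ)*I*(b:ℂ))^3) := by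
  have hcard : ({(0,0), (1,0), (0,1), (1,1), (3,3)} : Finset (ℤ × ℤ)).card = 5 := by decide
  rw [maskPoly, hcard]
  congr 1
  rw [Finset.sum_insert (by decide), Finset.sum_insert (by decide),
      Finset.sum_insert (by decide), Finset.sum_insert (by decide), Finset.sum_singleton]
  simp only []
  push_cast
  rw [show (2*(Real.pi:ℂ)*I*((a:ℂ)*0+(b:ℂ)*0)) = 0 by ring, Complex.exp_zero,
      show (2*(Real.pi:ℂ)*I*((a:ℂ)*1+(b:ℂ)*0)) = 2*(Real.pi:ℂ)*I*a by ring,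
      show (2*(Real.pi:ℂ)*I*((a:ℂ)*0+(b:ℂ)*1)) = 2*(Real.pi:ℂ)*I*b by ring,
      show (2*(Real.pi:ℂ)*I*((a:ℂ)*1+(b:ℂ)*1)) = 2*(Real.pi:ℂ)*I*a + 2*(Real.pi:ℂ)*I*b by ring,
      show (2*(Real.pi:ℂ)*I*((a:ℂ)*3+(b:ℂ)*3)) = (3:ℕ)*(2*(Real.pi:ℂ)*I*a) + (3:ℕ)*(2*(Real.pi:ℂ)*I*b) by
        push_cast; ring,
      Complex.exp_add, Complex.exp_add, Complex.exp_nat_mul, Complex.exp_nat_mul]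
  ring

/-- exp(2πi r) = exp(2πi s) iff r - s ∈ ℤ (one direction packaged). -/
private lemma exp_eq_exp_real {r s : ℝ}
    (h : Complex.exp (2*(Real.pi:ℂ)*I*(r:ℂ)) = Complex.exp (2*(Real.pi:ℂ)*I*(s:ℂ))) :
    ∃ m : ℤ, r = s + m := by
  rw [Complex.exp_eq_exp_iff_exists_int] at h
  obtain ⟨m, hm⟩ := h
  refine ⟨m, ?_⟩
  have h2 : (2*(Real.pi:ℂ)*I) * (r:ℂ) = (2*(Real.pi:ℂ)*I) * ((s:ℂ) + (m:ℂ)) := by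
    rw [mul_add]; linear_combination hm
  have h3 : (r:ℂ) = (s:ℂ) + (m:ℂ) := mul_left_cancel₀ two_pi_I_ne' h2
  exact_mod_cast h3

/-- The zero set of the mask polynomial of `D = {(0,0),(1,0),(0,1),(1,1),(3,3)}`
equals `(⋃_{j=1}^{4} (j/5)(1,2)ᵗ + ℤ²) ∪ (⋃_{j=1}^{4} (j/5)(1,3)ᵗ + ℤ²)`. -/
theorem stmt3 :
    {ξ : ℝ × ℝ | maskPoly ({(0,0), (1,0), (0,1), (1,1), (3,3)} : Finset (ℤ × ℤ)) ξ = 0} =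
      {ξ : ℝ × ℝ | ∃ j ∈ Finset.Icc (1:ℕ) 4, ∃ z : ℤ × ℤ,
        ξ = ((j:ℝ)/5 + (z.1:ℝ), 2*(j:ℝ)/5 + (z.2:ℝ))} ∪
      {ξ : ℝ × ℝ | ∃ j ∈ Finset.Icc (1:ℕ) 4, ∃ z : ℤ × ℤ,
        ξ = ((j:ℝ)/5 + (z.1:ℝ), 3*(j:ℝ)/5 + (z.2:ℝ))} := by
  ext ⟨a, b⟩
  simp only [Set.mem_setOf_eq, Set.mem_union]
  rw [maskExpand]
  set x := Complex.exp (2*(Real.pi:ℂ)*I*(a:ℂ)) with hxdef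
  set y := Complex.exp (2*(Real.pi:ℂ)*I*(b:ℂ)) with hydef
  constructor
  · intro h
    have hsum : 1 + x + y + x*y + x^3*y^3 = 0 := by
      have h5 : (5:ℂ)⁻¹ ≠ 0 := by norm_num
      field_simp at h
      linear_combination h
    obtain ⟨hx5, hx1, hy23⟩ := alg' x y (abs_exp_real' a) (abs_exp_real' b) hsum
    -- from x^5 = 1 : 5a ∈ ℤ
    have h5a : ∃ n : ℤ, (5:ℝ) * a = n := by
      rw [hxdef, ← Complex.exp_nat_mul, Complex.exp_eq_one_iff] at hx5
      obtain ⟨n, hn⟩ := hx5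
      refine ⟨n, ?_⟩
      have h2 : (2*(Real.pi:ℂ)*I) * ((5:ℝ)*a : ℂ) = (2*(Real.pi:ℂ)*I) * (n:ℂ) := by
        push_cast
        linear_combination hn
      have h3 : (((5:ℝ)*a : ℝ):ℂ) = (n:ℂ) := by
        have := mul_left_cancel₀ two_pi_I_ne' h2
        exact_mod_cast this
      exact_mod_cast h3
    obtain ⟨n, hn⟩ := h5a
    have ha : a = (n:ℝ)/5 := by linarith
    set j0 : ℤ := n % 5 with hj0def
    set k : ℤ := n / 5 with hkdef
    have hnk : 5 * k + j0 = n := Int.mul_ediv_add_emod n 5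
    have hj0nonneg : 0 ≤ j0 := Int.emod_nonneg n (by norm_num)
    have hj0lt : j0 < 5 := Int.emod_lt_of_pos n (by norm_num)
    have hj0ne : j0 ≠ 0 := by
      intro h0
      apply hx1
      have hak : a = (k:ℝ) := by
        rw [ha]
        have : (n:ℝ) = 5 * k := by exact_mod_cast (by omega : n = 5 * k)
        rw [this]; ring
      rw [hxdef, hak,
        show (2*(Real.pi:ℂ)*I*((k:ℝ):ℂ)) = (k:ℤ) * (2*(Real.pi:ℂ)*I) by push_cast; ring]
      exact Complex.exp_int_mul_two_pi_mul_I k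
    set j : ℕ := j0.toNat with hjdef
    have hjcast : (j:ℝ) = (j0:ℝ) := by
      rw [hjdef]; exact_mod_cast congrArg (Int.cast : ℤ → ℝ) (Int.toNat_of_nonneg hj0nonneg)
    have hjmem : j ∈ Finset.Icc (1:ℕ) 4 := by
      rw [Finset.mem_Icc]; omega
    have haj : a = (j:ℝ)/5 + (k:ℝ) := by
      rw [ha, hjcast]
      have : (n:ℝ) = 5*(k:ℝ) + (j0:ℝ) := by exact_mod_cast hnk.symm
      rw [this]; ring
    rcases hy23 with hy2 | hy3
    · left
      have hyx : Complex.exp (2*(Real.pi:ℂ)*I*(b:ℂ)) = Complex.exp (2*(Real.pi:ℂ)*I*((2*a : ℝ):ℂ)) := by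
        rw [← hydef, hy2, hxdef, ← Complex.exp_nat_mul]
        congr 1
        push_cast; ring
      obtain ⟨m, hm⟩ := exp_eq_exp_real hyx
      refine ⟨j, hjmem, (k, 2*k + m), ?_⟩
      have hb : b = 2*(j:ℝ)/5 + ((2*k+m : ℤ):ℝ) := by
        push_cast
        rw [hm, haj]; ring
      simp only [Prod.mk.injEq]
      exact ⟨haj, hb⟩
    · right
      have hyx : Complex.exp (2*(Real.pi:ℂ)*I*(b:ℂ)) = Complex.exp (2*(Real.pi:ℂ)*I*((3*a : ℝ):ℂ)) := by
        rw [← hydef, hy3, hxdef, ← Complex.exp_nat_mul]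
        congr 1
        push_cast; ring
      obtain ⟨m, hm⟩ := exp_eq_exp_real hyx
      refine ⟨j, hjmem, (k, 3*k + m), ?_⟩
      have hb : b = 3*(j:ℝ)/5 + ((3*k+m : ℤ):ℝ) := by
        push_cast
        rw [hm, haj]; ring
      simp only [Prod.mk.injEq]
      exact ⟨haj, hb⟩
  · rintro (⟨j, hj, z, hz⟩ | ⟨j, hj, z, hz⟩) <;> rw [Finset.mem_Icc] at hj
    · obtain ⟨ha, hb⟩ := Prod.ext_iff.mp hz
      simp only at ha hb
      set t := Complex.exp (2*(Real.pi:ℂ)*I*(((j:ℝ)/5:ℝ):ℂ)) with htdef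
      have ht5 : t^5 = 1 := root_pow5' j
      have ht1 : t ≠ 1 := root_ne_one' j hj.1 hj.2
      have hg : 1 + t + t^2 + t^3 + t^4 = 0 := geom5' t ht5 ht1
      have hx_t : x = t := by
        rw [hxdef, htdef, ha,
          show (2*(Real.pi:ℂ)*I*(((j:ℝ)/5 + (z.1:ℝ) : ℝ):ℂ))
            = 2*(Real.pi:ℂ)*I*(((j:ℝ)/5:ℝ):ℂ) + (z.1:ℤ) * (2*(Real.pi:ℂ)*I) by push_cast; ring,
          Complex.exp_add, Complex.exp_int_mul_two_pi_mul_I, mul_one]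
      have hy_t : y = t^2 := by
        rw [hydef, htdef, hb, ← Complex.exp_nat_mul,
          show (2*(Real.pi:ℂ)*I*((2*(j:ℝ)/5 + (z.2:ℝ) : ℝ):ℂ))
            = ((2:ℕ):ℂ) * (2*(Real.pi:ℂ)*I*(((j:ℝ)/5:ℝ):ℂ)) + (z.2:ℤ) * (2*(Real.pi:ℂ)*I) by
              push_cast; ring,
          Complex.exp_add, Complex.exp_int_mul_two_pi_mul_I, mul_one]
      rw [hx_t, hy_t]
      linear_combination (5:ℂ)⁻¹ * hg + (5:ℂ)⁻¹ * t^4 * ht5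
    · obtain ⟨ha, hb⟩ := Prod.ext_iff.mp hz
      simp only at ha hb
      set t := Complex.exp (2*(Real.pi:ℂ)*I*(((j:ℝ)/5:ℝ):ℂ)) with htdef
      have ht5 : t^5 = 1 := root_pow5' j
      have ht1 : t ≠ 1 := root_ne_one' j hj.1 hj.2
      have hg : 1 + t + t^2 + t^3 + t^4 = 0 := geom5' t ht5 ht1
      have hx_t : x = t := by
        rw [hxdef, htdef, ha,
          show (2*(Real.pi:ℂ)*I*(((j:ℝ)/5 + (z.1:ℝ) : ℝ):ℂ))
            = 2*(Real.pi:ℂ)*I*(((j:ℝ)/5:ℝ):ℂ) + (z.1:ℤ) * (2*(Real.pi:ℂ)*I) by push_cast; ring,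
          Complex.exp_add, Complex.exp_int_mul_two_pi_mul_I, mul_one]
      have hy_t : y = t^3 := by
        rw [hydef, htdef, hb, ← Complex.exp_nat_mul,
          show (2*(Real.pi:ℂ)*I*((3*(j:ℝ)/5 + (z.2:ℝ) : ℝ):ℂ))
            = ((3:ℕ):ℂ) * (2*(Real.pi:ℂ)*I*(((j:ℝ)/5:ℝ):ℂ)) + (z.2:ℤ) * (2*(Real.pi:ℂ)*I) by
              push_cast; ring,
          Complex.exp_add, Complex.exp_int_mul_two_pi_mul_I, mul_one]
      rw [hx_t, hy_t]
      linear_combination (5:ℂ)⁻¹ * hg + (5:ℂ)⁻¹ * t^2 * (t^5+1) * ht5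
end
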